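/- arXiv:1307.3748 — 2 statements merged into one kernel-verified Lean document; each statement's English description precedes it below -/
import Mathlib

section
/- Let g ∈ k[T][X_1,…,X_n] be an irreducible polynomial (over the field of fractions of k[T]) one of whose coefficients equals 1, and suppose σ is a ring automorphism of k[T][X_1,…,X_n] induced by T ↦ T^M (M > 1) fixing k, such that the zero sets of g and of g^σ coincide, i.e., g^σ = b·g for some nonzero scalar b. Then b = 1 and all coefficients of g lie in k. -/
/-- Let `g ∈ k[T][X₁,…,Xₙ]` be irreducible over `k(T)` with some coefficient equal to `1`,
and let `σ` be induced by `T ↦ T^M` (`M > 1`), acting coefficientwise. If `g^σ = b • g`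
for a scalar `b ∈ k(T)`, then `b = 1` and all coefficients of `g` lie in `k`. -/
theorem stmt8 {k : Type*} [Field k] [IsAlgClosed k] (n M : ℕ) (hM : 1 < M)
    (g : MvPolynomial (Fin n) (Polynomial k))
    (hirr : Irreducible (MvPolynomial.map (algebraMap (Polynomial k) (RatFunc k)) g))
    (hone : ∃ m, MvPolynomial.coeff m g = 1)
    (b : RatFunc k)
    (hb : MvPolynomial.map
        ((algebraMap (Polynomial k) (RatFunc k)).comp
          ((Polynomial.aeval (Polynomial.X ^ M : Polynomial k)).toRingHom)) g =
      MvPolynomial.C b * MvPolynomial.map (algebraMap (Polynomial k) (RatFunc k)) g) :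
    b = 1 ∧ ∀ m, ∃ c : k, MvPolynomial.coeff m g = Polynomial.C c := by
  have key : ∀ m, algebraMap (Polynomial k) (RatFunc k)
      (Polynomial.aeval (Polynomial.X ^ M : Polynomial k) (MvPolynomial.coeff m g)) =
      b * algebraMap (Polynomial k) (RatFunc k) (MvPolynomial.coeff m g) := by
    intro m
    have := congrArg (MvPolynomial.coeff m) hb
    simpa [MvPolynomial.coeff_map, MvPolynomial.coeff_C_mul] using this
  obtain ⟨m₀, hm₀⟩ := hone
  have hb1 : b = 1 := by
    have := key m₀
    rw [hm₀] at this
    simpa using this.symm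
  subst hb1
  refine ⟨rfl, fun m => ?_⟩
  have hinj : Function.Injective (algebraMap (Polynomial k) (RatFunc k)) :=
    IsFractionRing.injective _ _
  have heq : Polynomial.aeval (Polynomial.X ^ M : Polynomial k) (MvPolynomial.coeff m g) =
      MvPolynomial.coeff m g := hinj (by simpa using key m)
  set c := MvPolynomial.coeff m g with hc
  have hcomp : c.comp (Polynomial.X ^ M) = c := by
    have : Polynomial.aeval (Polynomial.X ^ M : Polynomial k) c = c.comp (Polynomial.X ^ M) := by
      rw [Polynomial.aeval_def, Polynomial.comp, Polynomial.algebraMap_eq]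
    rwa [this] at heq
  have hdeg : c.natDegree * M = c.natDegree := by
    conv_rhs => rw [← hcomp]
    rw [Polynomial.natDegree_comp, Polynomial.natDegree_X_pow]
  have hd0 : c.natDegree = 0 := by
    by_contra h
    have h1 : 1 ≤ c.natDegree := Nat.pos_of_ne_zero h
    nlinarith
  exact ⟨c.coeff 0, (Polynomial.eq_C_of_natDegree_eq_zero hd0)⟩
end

section
/- Let k be an algebraically closed field, f a nonzero polynomial in n variables over the algebraic closure of k(t), and σ an automorphism of the algebraic closure of k(t) fixing k pointwise with σ(t) = t^M for some integer M > 1. If f divides f^{σ^{-1}} (the polynomial obtained by applying σ^{-1} to each coefficient) in the polynomial ring over the algebraic closure of k(t), then there exists a nonzero scalar a in the algebraic closure of k(t) such that a·f has all coefficients in k. -/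
section PolyPart
open Polynomial

lemma lemA {k : Type*} [Field k] {M : ℕ} (hM : 1 < M) (a b : k[X]) (hb : b ≠ 0)
    (h : a.comp (X ^ M) * b = a * b.comp (X ^ M)) : ∃ s : k, a = C s * b := by
  have hXM : (X ^ M : k[X]) ≠ C ((X ^ M : k[X]).coeff 0) := by
    intro hc
    have h1 := congrArg natDegree hc
    rw [natDegree_X_pow, natDegree_C] at h1
    omega
  have hcompne : ∀ p : k[X], p ≠ 0 → p.comp (X ^ M) ≠ 0 := by
    intro p hp hc
    rcases (comp_eq_zero_iff).mp hc with h1 | h2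
    · exact hp h1
    · exact hXM h2.2
  have hcompdeg : ∀ p : k[X], (p.comp (X ^ M)).natDegree = M * p.natDegree := by
    intro p
    rw [natDegree_comp, natDegree_X_pow, mul_comm]
  have key : ∀ p : k[X], p ≠ 0 → p.comp (X ^ M) * b = p * b.comp (X ^ M) →
      p.natDegree = b.natDegree := by
    intro p hp hrel
    have hd := congrArg natDegree hrel
    rw [natDegree_mul (hcompne p hp) hb, natDegree_mul hp (hcompne b hb),
      hcompdeg, hcompdeg] at hd
    have h2 : ((M : ℤ) - 1) * (p.natDegree - b.natDegree) = 0 := by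
      have := congrArg (fun x : ℕ => (x : ℤ)) hd
      push_cast at this
      ring_nf
      ring_nf at this
      linarith
    rcases mul_eq_zero.mp h2 with h3 | h3
    · exfalso; have : (1 : ℤ) < M := by exact_mod_cast hM
      linarith
    · have : (p.natDegree : ℤ) = b.natDegree := by linarith
      exact_mod_cast this
  by_cases ha : a = 0
  · exact ⟨0, by simp [ha]⟩
  have hdab : a.natDegree = b.natDegree := key a ha h
  set s : k := a.leadingCoeff / b.leadingCoeff with hs
  have hs0 : s ≠ 0 := div_ne_zero (leadingCoeff_ne_zero.mpr ha) (leadingCoeff_ne_zero.mpr hb)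
  by_cases h0 : a - C s * b = 0
  · exact ⟨s, sub_eq_zero.mp h0⟩
  · exfalso
    have hrel' : (a - C s * b).comp (X ^ M) * b = (a - C s * b) * b.comp (X ^ M) := by
      rw [sub_comp, mul_comp, C_comp]
      ring_nf
      ring_nf at h
      linear_combination h
    have hd' := key _ h0 hrel'
    have hlt : (a - C s * b).degree < a.degree := by
      apply degree_sub_lt
      · rw [degree_C_mul hs0, degree_eq_natDegree ha, degree_eq_natDegree hb, hdab]
      · exact ha
      · rw [leadingCoeff_mul, leadingCoeff_C, hs,
          div_mul_cancel₀ _ (leadingCoeff_ne_zero.mpr hb)]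
    have := natDegree_lt_natDegree h0 hlt
    omega

variable {k : Type*} [Field k]

noncomputable def phi (k : Type*) [Field k] (M : ℕ) : k[X] →+* RatFunc k :=
  eval₂RingHom (RatFunc.C (K := k)) (RatFunc.X ^ M)

lemma phi_apply (M : ℕ) (p : k[X]) :
    phi k M p = algebraMap k[X] (RatFunc k) (p.comp (X ^ M)) := by
  have h1 : (algebraMap k[X] (RatFunc k)).comp C = RatFunc.C (K := k) :=
    RingHom.ext fun a => RatFunc.algebraMap_C a
  have h2 : algebraMap k[X] (RatFunc k) (X ^ M) = RatFunc.X ^ M := by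
    rw [map_pow, RatFunc.algebraMap_X]
  rw [comp, hom_eval₂, h1, h2]
  simp [phi, coe_eval₂RingHom]

lemma phi_injective (M : ℕ) (hM : 1 < M) : Function.Injective (phi k M) := by
  have hXM : (X ^ M : k[X]) ≠ C ((X ^ M : k[X]).coeff 0) := by
    intro hc
    have h1 := congrArg natDegree hc
    rw [natDegree_X_pow, natDegree_C] at h1
    omega
  intro p q hpq
  rw [phi_apply, phi_apply] at hpq
  have h2 := IsFractionRing.injective k[X] (RatFunc k) hpq
  have h3 : (p - q).comp (X ^ M) = 0 := by rw [sub_comp, h2, sub_self]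
  rcases comp_eq_zero_iff.mp h3 with h4 | h4
  · exact sub_eq_zero.mp h4
  · exact absurd h4.2 hXM
noncomputable def tau (k : Type*) [Field k] (M : ℕ) (hM : 1 < M) : RatFunc k →+* RatFunc k :=
  IsFractionRing.lift (phi_injective M hM)

lemma tau_algebraMap (M : ℕ) (hM : 1 < M) (p : k[X]) :
    tau k M hM (algebraMap k[X] (RatFunc k) p) = algebraMap k[X] (RatFunc k) (p.comp (X ^ M)) := by
  rw [tau, IsFractionRing.lift_algebraMap, phi_apply]

lemma lemB (M : ℕ) (hM : 1 < M) (r : RatFunc k) (hr : tau k M hM r = r) :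
    ∃ c : k, r = RatFunc.C c := by
  have hXM : (X ^ M : k[X]) ≠ C ((X ^ M : k[X]).coeff 0) := by
    intro hc
    have h1 := congrArg natDegree hc
    rw [natDegree_X_pow, natDegree_C] at h1
    omega
  have hcompne : ∀ p : k[X], p ≠ 0 → p.comp (X ^ M) ≠ 0 := by
    intro p hp hc
    rcases (comp_eq_zero_iff).mp hc with h1 | h2
    · exact hp h1
    · exact hXM h2.2
  set N := r.num with hN
  set D := r.denom with hD
  have hD0 : D ≠ 0 := r.denom_ne_zero
  have hinj := IsFractionRing.injective k[X] (RatFunc k)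
  have halg : ∀ p : k[X], p ≠ 0 → algebraMap k[X] (RatFunc k) p ≠ 0 := by
    intro p hp hc
    exact hp (hinj (by rw [hc, map_zero]))
  have hr2 : algebraMap k[X] (RatFunc k) (N.comp (X ^ M)) /
      algebraMap k[X] (RatFunc k) (D.comp (X ^ M)) =
      algebraMap k[X] (RatFunc k) N / algebraMap k[X] (RatFunc k) D := by
    rw [← tau_algebraMap M hM, ← tau_algebraMap M hM, ← map_div₀, r.num_div_denom, hr,
      ← r.num_div_denom]
  have hcross : N.comp (X ^ M) * D = N * D.comp (X ^ M) := by
    apply hinj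
    rw [map_mul, map_mul]
    rw [div_eq_div_iff (halg _ (hcompne D hD0)) (halg _ hD0)] at hr2
    exact hr2
  obtain ⟨s, hs⟩ := lemA hM N D hD0 hcross
  refine ⟨s, ?_⟩
  rw [← r.num_div_denom, ← hN, ← hD, hs, map_mul, mul_div_assoc,
    div_self (halg _ hD0), mul_one, RatFunc.algebraMap_C]

section lemC
variable [IsAlgClosed k] (M : ℕ) (hM : 1 < M)
  (σ : AlgebraicClosure (RatFunc k) ≃+* AlgebraicClosure (RatFunc k))
  (hfix : ∀ c : k, σ (algebraMap (RatFunc k) (AlgebraicClosure (RatFunc k)) (RatFunc.C c)) =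
      algebraMap (RatFunc k) (AlgebraicClosure (RatFunc k)) (RatFunc.C c))
  (ht : σ (algebraMap (RatFunc k) (AlgebraicClosure (RatFunc k)) RatFunc.X) =
      (algebraMap (RatFunc k) (AlgebraicClosure (RatFunc k)) RatFunc.X) ^ M)

local notation "A" => AlgebraicClosure (RatFunc k)

include hfix ht in
lemma sigma_comm : (σ : A →+* A).comp (algebraMap (RatFunc k) A) =
    (algebraMap (RatFunc k) A).comp (tau k M hM) := by
  apply IsLocalization.ringHom_ext (nonZeroDivisors k[X])
  apply Polynomial.ringHom_ext
  · intro a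
    simp only [RingHom.comp_apply]
    rw [tau_algebraMap M hM, C_comp, RatFunc.algebraMap_C]
    exact hfix a
  · simp only [RingHom.comp_apply]
    rw [tau_algebraMap M hM, X_comp, map_pow, map_pow, RatFunc.algebraMap_X]
    exact ht

include hM hfix ht in
lemma lemC (b : A) (hb : σ b = b) :
    ∃ c : k, b = algebraMap (RatFunc k) A (RatFunc.C c) := by
  have hint : IsIntegral (RatFunc k) b := Algebra.IsIntegral.isIntegral b
  set p := minpoly (RatFunc k) b with hp
  have hpm : p.Monic := minpoly.monic hint
  have hq0 : Polynomial.aeval b (p.map (tau k M hM)) = 0 := by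
    have h1 : σ (eval₂ (algebraMap (RatFunc k) A) b p) =
        eval₂ ((σ : A →+* A).comp (algebraMap (RatFunc k) A)) b p := by
      have h1' := hom_eval₂ p (algebraMap (RatFunc k) A) (σ : A →+* A) b
      simpa [hb] using h1'
    rw [aeval_def, eval₂_map, ← sigma_comm M hM σ hfix ht, ← h1]
    have h2 : eval₂ (algebraMap (RatFunc k) A) b p = 0 := by
      have h3 := minpoly.aeval (RatFunc k) b
      rwa [aeval_def] at h3
    rw [h2, map_zero]
  have hdvd2 : p ∣ p.map (tau k M hM) := minpoly.dvd _ b hq0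
  have hqm : (p.map (tau k M hM)).Monic := hpm.map _
  have hdeg : (p.map (tau k M hM)).natDegree = p.natDegree := natDegree_map _
  have heqq : p.map (tau k M hM) = p := by
    obtain ⟨u, hu⟩ := hdvd2
    have hp0 : p ≠ 0 := hpm.ne_zero
    have hu0 : u ≠ 0 := by
      rintro rfl
      rw [mul_zero] at hu
      exact hqm.ne_zero hu
    have hdu : u.natDegree = 0 := by
      have h4 := congrArg natDegree hu
      rw [natDegree_mul hp0 hu0, hdeg] at h4
      omega
    have hue : u = C (u.coeff 0) := eq_C_of_natDegree_eq_zero hdu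
    have hlc : u.coeff 0 = 1 := by
      have h5 := congrArg leadingCoeff hu
      rw [hqm.leadingCoeff, hue, leadingCoeff_mul, hpm.leadingCoeff, one_mul,
        leadingCoeff_C] at h5
      exact h5.symm
    rw [hu, hue, hlc, map_one, mul_one]
  have hcoeff : ∀ i, ∃ c : k, p.coeff i = RatFunc.C c := by
    intro i
    apply lemB M hM
    have h6 := congrArg (fun q => Polynomial.coeff q i) heqq
    simpa [coeff_map] using h6
  choose s hs using hcoeff
  set ψ : k →+* A := (algebraMap (RatFunc k) A).comp (RatFunc.C (K := k)) with hψ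
  set P := p.map (algebraMap (RatFunc k) A) with hP
  have hPl : P ∈ lifts ψ := by
    rw [lifts_iff_coeff_lifts]
    intro i
    refine ⟨s i, ?_⟩
    rw [hψ, RingHom.comp_apply, ← hs i, hP, coeff_map]
  obtain ⟨p', hp'⟩ := (mem_lifts _).mp hPl
  have hP0 : P ≠ 0 := (hpm.map _).ne_zero
  have hp'0 : p' ≠ 0 := by
    rintro rfl
    rw [Polynomial.map_zero] at hp'
    exact hP0 hp'.symm
  have hbP : Polynomial.eval b P = 0 := by
    rw [hP, eval_map, ← aeval_def, minpoly.aeval]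
  have hsplit : p'.Splits := IsAlgClosed.splits p'
  have hfac := Polynomial.Splits.eq_prod_roots hsplit
  rw [← hp', hfac, Polynomial.map_mul, map_C, eval_mul, eval_C] at hbP
  have hprod : Polynomial.eval b
      (Polynomial.map ψ (Multiset.map (fun a => X - C a) p'.roots).prod) =
      (Multiset.map (fun a => b - ψ a) p'.roots).prod := by
    rw [Polynomial.map_multiset_prod, eval_multiset_prod, Multiset.map_map, Multiset.map_map]
    apply congrArg
    apply Multiset.map_congr rfl
    intro a _
    simp
  rw [hprod] at hbP
  have hψlc : ψ p'.leadingCoeff ≠ 0 := by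
    intro hc
    exact leadingCoeff_ne_zero.mpr hp'0 (RingHom.injective ψ (by rw [hc, map_zero]))
  have h0 : (Multiset.map (fun a => b - ψ a) p'.roots).prod = 0 := by
    rcases mul_eq_zero.mp hbP with h | h
    · exact absurd h hψlc
    · exact h
  obtain ⟨x, hx, hx0⟩ := Multiset.mem_map.mp (Multiset.prod_eq_zero_iff.mp h0)
  refine ⟨x, ?_⟩
  rw [sub_eq_zero.mp hx0, hψ, RingHom.comp_apply]

end lemC

end PolyPart

section MvPart
open MvPolynomial

lemma deg_sum_eq {σ : Type*} (d : σ →₀ ℕ) : d.degree = d.sum fun _ e => e := rfl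

lemma Finsupp.degree_add'' {σ : Type*} (u v : σ →₀ ℕ) :
    (u + v).degree = u.degree + v.degree := by
  simp [Finsupp.degree_eq_weight_one, map_add]

lemma tdmul {R σ' : Type*} [CommRing R] [IsDomain R] (f g : MvPolynomial σ' R)
    (hf : f ≠ 0) (hg : g ≠ 0) :
    (f * g).totalDegree = f.totalDegree + g.totalDegree := by
  classical
  apply le_antisymm (MvPolynomial.totalDegree_mul f g)
  set df := f.totalDegree with hdf
  set dg := g.totalDegree with hdg
  set F := homogeneousComponent df f with hF'
  set G := homogeneousComponent dg g with hG'
  have hexF : ∃ m ∈ f.support, (m.sum fun _ e => e) = df :=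
    Finset.exists_mem_eq_sup _ (support_nonempty.mpr hf) _ |>.imp fun m h => ⟨h.1, h.2.symm⟩
  have hexG : ∃ m ∈ g.support, (m.sum fun _ e => e) = dg :=
    Finset.exists_mem_eq_sup _ (support_nonempty.mpr hg) _ |>.imp fun m h => ⟨h.1, h.2.symm⟩
  have hcF : ∀ d : σ' →₀ ℕ, coeff d F = if d.degree = df then coeff d f else 0 := fun d =>
    coeff_homogeneousComponent _ _ d
  have hcG : ∀ d : σ' →₀ ℕ, coeff d G = if d.degree = dg then coeff d g else 0 := fun d =>
    coeff_homogeneousComponent _ _ d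
  have hFne : F ≠ 0 := by
    obtain ⟨m, hm, hmd⟩ := hexF
    intro hc
    have h1 := hcF m
    rw [hc] at h1
    rw [if_pos (by rw [deg_sum_eq]; exact hmd)] at h1
    exact (mem_support_iff.mp hm) (by simpa using h1.symm)
  have hGne : G ≠ 0 := by
    obtain ⟨m, hm, hmd⟩ := hexG
    intro hc
    have h1 := hcG m
    rw [hc] at h1
    rw [if_pos (by rw [deg_sum_eq]; exact hmd)] at h1
    exact (mem_support_iff.mp hm) (by simpa using h1.symm)
  have hFGne : F * G ≠ 0 := mul_ne_zero hFne hGne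
  obtain ⟨d, hd⟩ := MvPolynomial.ne_zero_iff.mp hFGne
  have hdh : (F * G).IsHomogeneous (df + dg) :=
    (homogeneousComponent_isHomogeneous df f).mul (homogeneousComponent_isHomogeneous dg g)
  have hdd : d.degree = df + dg := by
    have := hdh hd
    rw [Finsupp.degree_eq_weight_one]
    exact this
  have hcoeq : coeff d (f * g) = coeff d (F * G) := by
    rw [coeff_mul, coeff_mul]
    apply Finset.sum_congr rfl
    intro uv huv
    have huv' : uv.1 + uv.2 = d := Finset.HasAntidiagonal.mem_antidiagonal.mp huv
    have hsum : uv.1.degree + uv.2.degree = df + dg := by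
      rw [← Finsupp.degree_add'', huv', hdd]
    have hcoeff_big : ∀ (p : MvPolynomial σ' R) (m : σ' →₀ ℕ), p.totalDegree < m.degree →
        coeff m p = 0 := by
      intro p m hm
      by_contra hc
      have := MvPolynomial.le_totalDegree (mem_support_iff.mpr hc)
      rw [← deg_sum_eq] at this
      omega
    by_cases h1 : uv.1.degree = df
    · have h2 : uv.2.degree = dg := by omega
      rw [hcF, hcG, if_pos h1, if_pos h2]
    · rcases Nat.lt_or_ge uv.1.degree df with hlt | hge
      · have h2 : dg < uv.2.degree := by omega
        rw [hcG, if_neg (by omega), hcoeff_big g uv.2 h2, mul_zero, mul_zero]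
      · have h2 : df < uv.1.degree := by omega
        rw [hcF, if_neg h1, hcoeff_big f uv.1 h2, zero_mul, zero_mul]
  have hdsup : d ∈ (f * g).support := mem_support_iff.mpr (by rw [hcoeq]; exact hd)
  have := MvPolynomial.le_totalDegree hdsup
  rw [← deg_sum_eq, hdd] at this
  exact this

lemma eq_C_of_totalDegree_eq_zero {R σ' : Type*} [CommSemiring R] (g : MvPolynomial σ' R)
    (h : g.totalDegree = 0) : g = MvPolynomial.C (MvPolynomial.coeff 0 g) := by
  classical
  ext m
  rw [MvPolynomial.coeff_C]
  split_ifs with hm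
  · rw [← hm]
  · by_contra hc
    have hms : m ∈ g.support := MvPolynomial.mem_support_iff.mpr fun h0 => hc (h0.trans rfl) |>.elim
    have h2 := (MvPolynomial.totalDegree_eq_zero_iff _ g).mp h m hms
    exact hm (by ext x; exact (h2 x).symm)

end MvPart

/-- If `f` is a nonzero polynomial over the algebraic closure of `k(t)`, `σ` an automorphism
fixing `k` with `σ(t) = t^M` (`M > 1`), and `f` divides `f^{σ⁻¹}` (coefficientwise `σ⁻¹`),
then some nonzero scalar multiple `a • f` has all its coefficients in `k`. -/
theorem stmt12 {k : Type*} [Field k] [IsAlgClosed k] (n M : ℕ) (hM : 1 < M)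
    (σ : AlgebraicClosure (RatFunc k) ≃+* AlgebraicClosure (RatFunc k))
    (hfix : ∀ c : k, σ (algebraMap (RatFunc k) (AlgebraicClosure (RatFunc k)) (RatFunc.C c)) =
      algebraMap (RatFunc k) (AlgebraicClosure (RatFunc k)) (RatFunc.C c))
    (ht : σ (algebraMap (RatFunc k) (AlgebraicClosure (RatFunc k)) RatFunc.X) =
      (algebraMap (RatFunc k) (AlgebraicClosure (RatFunc k)) RatFunc.X) ^ M)
    (f : MvPolynomial (Fin n) (AlgebraicClosure (RatFunc k))) (hf : f ≠ 0)
    (hdvd : f ∣ MvPolynomial.map (σ.symm : AlgebraicClosure (RatFunc k) →+* AlgebraicClosure (RatFunc k)) f) :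
    ∃ a : AlgebraicClosure (RatFunc k), a ≠ 0 ∧ ∀ m, ∃ c : k,
      a * MvPolynomial.coeff m f =
        algebraMap (RatFunc k) (AlgebraicClosure (RatFunc k)) (RatFunc.C c) := by
  classical
  set A := AlgebraicClosure (RatFunc k) with hA
  have hinj : Function.Injective (σ.symm : A →+* A) := σ.symm.injective
  have hmapne : MvPolynomial.map (σ.symm : A →+* A) f ≠ 0 := by
    intro hc
    exact hf (MvPolynomial.map_injective _ hinj (by simpa using hc))
  obtain ⟨g, hg⟩ := hdvd
  have hg0 : g ≠ 0 := by
    rintro rfl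
    rw [mul_zero] at hg
    exact hmapne hg
  have htd : (MvPolynomial.map (σ.symm : A →+* A) f).totalDegree = f.totalDegree := by
    rw [MvPolynomial.totalDegree, MvPolynomial.totalDegree,
      MvPolynomial.support_map_of_injective f hinj]
  have htd2 := tdmul f g hf hg0
  rw [← hg, htd] at htd2
  have hgc : g = MvPolynomial.C (MvPolynomial.coeff 0 g) :=
    eq_C_of_totalDegree_eq_zero g (by omega)
  set c : A := MvPolynomial.coeff 0 g with hc'
  have hc0 : c ≠ 0 := by
    intro h0
    rw [hgc, h0, map_zero, mul_zero] at hg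
    exact hmapne hg
  have key : ∀ m, σ.symm (MvPolynomial.coeff m f) = c * MvPolynomial.coeff m f := by
    intro m
    have h1 := congrArg (MvPolynomial.coeff m) hg
    rw [MvPolynomial.coeff_map] at h1
    rw [hgc, mul_comm f (MvPolynomial.C c), MvPolynomial.coeff_C_mul] at h1
    exact h1
  obtain ⟨m0, hm0⟩ := MvPolynomial.ne_zero_iff.mp hf
  refine ⟨(MvPolynomial.coeff m0 f)⁻¹, inv_ne_zero hm0, fun m => ?_⟩
  set b : A := (MvPolynomial.coeff m0 f)⁻¹ * MvPolynomial.coeff m f with hb'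
  have hσb : σ b = b := by
    have h2 : σ.symm b = b := by
      have e1 : σ.symm b = (c * MvPolynomial.coeff m0 f)⁻¹ * (c * MvPolynomial.coeff m f) := by
        rw [hb', map_mul, map_inv₀, key, key]
      rw [e1, hb']
      rw [mul_inv, mul_comm c⁻¹, mul_assoc, inv_mul_cancel_left₀ hc0, mul_comm]
    conv_lhs => rw [← h2]
    exact σ.apply_symm_apply b
  obtain ⟨cc, hcc⟩ := lemC M hM σ hfix ht b hσb
  exact ⟨cc, hcc⟩
end
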